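/- (Lemma 3.) Let k ≥ 0 and let h : {0,1}^{k+2} → ℤ_2 be the Boolean function in variables x_0,…,x_{k+1} given by h = Σ_{β=1}^{k+1} c_β x_β x_0 + Σ_{1 ≤ μ < ν ≤ k} d_{μν} x_μ x_ν + Σ_{α=0}^{k+1} e_α x_α + e′, where c_{k+1} = 1, c_β ∈ ℤ_2 for 1 ≤ β ≤ k, and d_{μν}, e_α, e′ ∈ ℤ_2. Let h_i = h(i_0,…,i_{k+1}) for 0 ≤ i ≤ 2^{k+2}−1, where (i_0,…,i_{k+1}) is the binary representation of i with i_0 the least significant bit. Then for every 0 ≤ τ ≤ 2^{k+1}−1 one has (−1)^{h_τ + h_{τ+1}} + (−1)^{h_{τ+2^{k+1}} + h_{τ+1+2^{k+1}}} = 0, where all subscripts are reduced modulo 2^{k+2}. -/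

import Mathlib

/-- The `t`-th bit of the natural number `x`, viewed as an element of `ℤ₂`. -/
def bitb (x t : ℕ) : ZMod 2 := if x.testBit t then 1 else 0

lemma bitb_add_pow_lt {k i β : ℕ} (hβ : β < k + 1) :
    bitb (i + 2 ^ (k + 1)) β = bitb i β := by
  unfold bitb
  rw [Nat.add_comm, Nat.testBit_two_pow_add_gt hβ]

lemma bitb_lt {k i : ℕ} (hi : i < 2 ^ (k + 1)) : bitb i (k + 1) = 0 := by
  simp [bitb, Nat.testBit_lt_two_pow hi]

lemma bitb_add_pow_top {k i : ℕ} (hi : i < 2 ^ (k + 1)) :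
    bitb (i + 2 ^ (k + 1)) (k + 1) = 1 := by
  unfold bitb
  rw [Nat.add_comm, Nat.testBit_two_pow_add_eq, Nat.testBit_lt_two_pow hi]
  simp

lemma bitb0_succ (i : ℕ) : bitb (i + 1) 0 + bitb i 0 = 1 := by
  simp only [bitb, Nat.testBit_zero]
  rcases Nat.even_or_odd i with hi | hi
  · have h1 : i % 2 = 0 := Nat.even_iff.mp hi
    have h2 : (i + 1) % 2 = 1 := by omega
    simp [h1, h2]
  · have h1 : i % 2 = 1 := Nat.odd_iff.mp hi
    have h2 : (i + 1) % 2 = 0 := by omega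
    simp [h1, h2]

lemma sign_lemma (x y : ZMod 2) (hxy : x + y = 1) :
    (-1 : ℤ) ^ x.val + (-1 : ℤ) ^ y.val = 0 := by
  revert x y; decide

lemma pow_val_add (a b : ZMod 2) :
    (-1 : ℤ) ^ (a.val + b.val) = (-1 : ℤ) ^ ((a + b).val) := by
  revert a b; decide

theorem lemma3 (k : ℕ) (c : ℕ → ZMod 2) (d : ℕ → ℕ → ZMod 2) (e : ℕ → ZMod 2)
    (e' : ZMod 2) (hc : c (k + 1) = 1)
    (h : ℕ → ZMod 2)
    (hh : ∀ i, h i =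
        (∑ β ∈ Finset.Icc 1 (k + 1), c β * bitb i β * bitb i 0)
      + (∑ μ ∈ Finset.Icc 1 k, ∑ ν ∈ Finset.Ioc μ k, d μ ν * bitb i μ * bitb i ν)
      + (∑ α ∈ Finset.range (k + 2), e α * bitb i α) + e')
    (τ : ℕ) (hτ : τ ≤ 2 ^ (k + 1) - 1) :
    ((-1 : ℤ)) ^ ((h (τ % 2 ^ (k + 2))).val + (h ((τ + 1) % 2 ^ (k + 2))).val)
      + (-1 : ℤ) ^ ((h ((τ + 2 ^ (k + 1)) % 2 ^ (k + 2))).val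
          + (h ((τ + 1 + 2 ^ (k + 1)) % 2 ^ (k + 2))).val) = 0 := by
  have key : ∀ i, i < 2 ^ (k + 1) →
      h (i + 2 ^ (k + 1)) + h i = c (k + 1) * bitb i 0 + e (k + 1) := by
    intro i hi
    have e1 : ∀ β ∈ Finset.Icc 1 k,
        c β * bitb (i + 2 ^ (k + 1)) β * bitb (i + 2 ^ (k + 1)) 0
          = c β * bitb i β * bitb i 0 := by
      intro β hβ
      simp only [Finset.mem_Icc] at hβ
      rw [bitb_add_pow_lt (by omega), bitb_add_pow_lt (by omega)]
    have e2 : ∀ μ ∈ Finset.Icc 1 k, ∀ ν ∈ Finset.Ioc μ k,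
        d μ ν * bitb (i + 2 ^ (k + 1)) μ * bitb (i + 2 ^ (k + 1)) ν
          = d μ ν * bitb i μ * bitb i ν := by
      intro μ hμ ν hν
      simp only [Finset.mem_Icc] at hμ
      simp only [Finset.mem_Ioc] at hν
      rw [bitb_add_pow_lt (by omega), bitb_add_pow_lt (by omega)]
    have e3 : ∀ α ∈ Finset.range (k + 1),
        e α * bitb (i + 2 ^ (k + 1)) α = e α * bitb i α := by
      intro α hα
      simp only [Finset.mem_range] at hα
      rw [bitb_add_pow_lt (by omega)]
    have S1 : ∑ β ∈ Finset.Icc 1 (k + 1),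
        c β * bitb (i + 2 ^ (k + 1)) β * bitb (i + 2 ^ (k + 1)) 0
        = (∑ β ∈ Finset.Icc 1 (k + 1), c β * bitb i β * bitb i 0)
          + c (k + 1) * bitb i 0 := by
      rw [Finset.sum_Icc_succ_top (Nat.le_add_left 1 k),
          Finset.sum_Icc_succ_top (Nat.le_add_left 1 k),
          Finset.sum_congr rfl e1, bitb_add_pow_top hi, bitb_lt hi,
          bitb_add_pow_lt (Nat.succ_pos k)]
      ring
    have S2 : ∑ μ ∈ Finset.Icc 1 k, ∑ ν ∈ Finset.Ioc μ k,
        d μ ν * bitb (i + 2 ^ (k + 1)) μ * bitb (i + 2 ^ (k + 1)) ν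
        = ∑ μ ∈ Finset.Icc 1 k, ∑ ν ∈ Finset.Ioc μ k,
            d μ ν * bitb i μ * bitb i ν :=
      Finset.sum_congr rfl (fun μ hμ => Finset.sum_congr rfl (e2 μ hμ))
    have S3 : ∑ α ∈ Finset.range (k + 2),
        e α * bitb (i + 2 ^ (k + 1)) α
        = (∑ α ∈ Finset.range (k + 2), e α * bitb i α) + e (k + 1) := by
      rw [Finset.sum_range_succ, Finset.sum_range_succ (n := k + 1),
          Finset.sum_congr rfl e3, bitb_add_pow_top hi, bitb_lt hi]
      ring
    rw [hh, hh, S1, S2, S3]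
    have h2 : (2 : ZMod 2) = 0 := rfl
    linear_combination ((∑ β ∈ Finset.Icc 1 (k + 1), c β * bitb i β * bitb i 0)
      + (∑ μ ∈ Finset.Icc 1 k, ∑ ν ∈ Finset.Ioc μ k, d μ ν * bitb i μ * bitb i ν)
      + (∑ α ∈ Finset.range (k + 2), e α * bitb i α) + e') * h2
  have h2 : (2 : ZMod 2) = 0 := rfl
  have hpow : 2 ^ (k + 2) = 2 ^ (k + 1) + 2 ^ (k + 1) := by rw [pow_succ]; omega
  have hpos : 0 < 2 ^ (k + 1) := Nat.pow_pos (by omega)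
  have hτ' : τ < 2 ^ (k + 1) := by omega
  rcases eq_or_lt_of_le (show τ + 1 ≤ 2 ^ (k + 1) from hτ') with hcase | hcase
  · -- τ + 1 = 2^(k+1)
    have heven : 2 ∣ 2 ^ (k + 1) := dvd_pow_self 2 (Nat.succ_ne_zero k)
    have hodd : τ % 2 = 1 := by omega
    have hb1 : bitb τ 0 = 1 := by simp [bitb, Nat.testBit_zero, hodd]
    have hb0 : bitb 0 0 = 0 := by simp [bitb]
    have m1 : τ % 2 ^ (k + 2) = τ := Nat.mod_eq_of_lt (by omega)
    have m2 : (τ + 1) % 2 ^ (k + 2) = τ + 1 := Nat.mod_eq_of_lt (by omega)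
    have m3 : (τ + 2 ^ (k + 1)) % 2 ^ (k + 2) = τ + 2 ^ (k + 1) :=
      Nat.mod_eq_of_lt (by omega)
    have m4 : (τ + 1 + 2 ^ (k + 1)) % 2 ^ (k + 2) = 0 := by
      have : τ + 1 + 2 ^ (k + 1) = 2 ^ (k + 2) := by omega
      rw [this, Nat.mod_self]
    rw [m1, m2, m3, m4, pow_val_add, pow_val_add]
    apply sign_lemma
    have kA := key τ hτ'
    rw [hb1, hc] at kA
    have kB := key 0 hpos
    rw [hb0, Nat.zero_add] at kB
    rw [hcase]
    linear_combination kA + kB + e (k + 1) * h2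
  · -- τ + 1 < 2^(k+1)
    have m1 : τ % 2 ^ (k + 2) = τ := Nat.mod_eq_of_lt (by omega)
    have m2 : (τ + 1) % 2 ^ (k + 2) = τ + 1 := Nat.mod_eq_of_lt (by omega)
    have m3 : (τ + 2 ^ (k + 1)) % 2 ^ (k + 2) = τ + 2 ^ (k + 1) :=
      Nat.mod_eq_of_lt (by omega)
    have m4 : (τ + 1 + 2 ^ (k + 1)) % 2 ^ (k + 2) = τ + 1 + 2 ^ (k + 1) :=
      Nat.mod_eq_of_lt (by omega)
    rw [m1, m2, m3, m4, pow_val_add, pow_val_add]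
    apply sign_lemma
    have kA := key τ hτ'
    have kB := key (τ + 1) hcase
    linear_combination kA + kB + c (k + 1) * bitb0_succ τ + hc + e (k + 1) * h2
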